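/- Let O be a finite order ideal in the terms of n variables. If γ is a term not in O and β ∈ ∂O divides γ and has maximal degree among the elements of ∂O dividing γ, then ind_O(γ) = deg(γ/β) + 1. -/

import Mathlib

open MvPolynomial

/-- A term in `n` variables, viewed as its exponent vector in `ℕ^n`. -/
abbrev Term (n : ℕ) := Fin n →₀ ℕ

/-- The total degree of a term. -/
def termDeg {n : ℕ} (τ : Term n) : ℕ := τ.sum fun _ e => e

/-- `O` is an order ideal: every divisor (componentwise `≤`) of a term of `O` lies in `O`. -/
def IsOrderIdeal {n : ℕ} (O : Set (Term n)) : Prop :=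
  ∀ σ τ : Term n, τ ∈ O → σ ≤ τ → σ ∈ O

/-- The border `∂O` of an order ideal `O`. -/
def border {n : ℕ} (O : Set (Term n)) : Set (Term n) :=
  {μ | μ ∉ O ∧ ∃ τ ∈ O, ∃ i : Fin n, μ = τ + Finsupp.single i 1}

/-- The Pommaret basis `P_O = {σ ∉ O : σ / min σ ∈ O}` of the monomial ideal generated by the
terms outside `O`; here `i` is the minimal variable of `σ`. -/
def pommaret {n : ℕ} (O : Set (Term n)) : Set (Term n) :=
  {σ | σ ∉ O ∧ ∃ i : Fin n, σ i ≠ 0 ∧ (∀ j : Fin n, j < i → σ j = 0) ∧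
    σ - Finsupp.single i 1 ∈ O}

/-- `F` is an `H`-marked set (with tails in `O`): for every `α ∈ H`,
`F α = α - Σ_{σ ∈ O} c_σ σ`, i.e. the coefficient of `α` is `1` and all other
terms in the support of `F α` lie in `O`. -/
def IsMarkedSet {n : ℕ} (A : Type*) [CommRing A] (O H : Set (Term n))
    (F : Term n → MvPolynomial (Fin n) A) : Prop :=
  ∀ α ∈ H, (F α).coeff α = 1 ∧ ∀ γ ∈ (F α).support, γ ≠ α → γ ∈ O

/-- The `A`-submodule `⟨O⟩_A` of `R_A` spanned by the monomials with exponent in `O`. -/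
noncomputable def OSpan {n : ℕ} (A : Type*) [CommRing A] (O : Set (Term n)) :
    Submodule A (MvPolynomial (Fin n) A) :=
  Submodule.span A ((fun σ : Term n => (monomial σ (1 : A) : MvPolynomial (Fin n) A)) '' O)

/-- `R_A = (S) ⊕ ⟨O⟩_A` as an internal direct sum of `A`-modules. -/
def IsBasisDecomp {n : ℕ} (A : Type*) [CommRing A] (O : Set (Term n))
    (S : Set (MvPolynomial (Fin n) A)) : Prop :=
  (Submodule.restrictScalars A (Ideal.span S) ⊓ OSpan A O = ⊥) ∧
  (Submodule.restrictScalars A (Ideal.span S) ⊔ OSpan A O = ⊤)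

/-- `F` is an `H`-marked basis. -/
def IsMarkedBasis {n : ℕ} (A : Type*) [CommRing A] (O H : Set (Term n))
    (F : Term n → MvPolynomial (Fin n) A) : Prop :=
  IsMarkedSet A O H F ∧ IsBasisDecomp A O (F '' H)

/-- The iterated borders: `∂^0 O = O` and `∂^{k+1} O = ∂(∂^0 O ∪ ⋯ ∪ ∂^k O)`. -/
def borderIter {n : ℕ} (O : Set (Term n)) : ℕ → Set (Term n)
  | 0 => O
  | k + 1 => border (⋃ j : Fin (k + 1), borderIter O j.1)
decreasing_by exact j.2

/-- The index `ind_O(μ)`: the least `k` with `μ ∈ ∂^k O`. -/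
noncomputable def indO {n : ℕ} (O : Set (Term n)) (μ : Term n) : ℕ :=
  sInf {k | μ ∈ borderIter O k}

/-- The multiplicative set of `β i` for the degree-ordered border reduction structure:
`M_{β_i} = {η : β_j ∤ η β_i for every j > i}`. -/
def multSet {n m : ℕ} (β : Fin m → Term n) (i : Fin m) : Set (Term n) :=
  {η | ∀ j : Fin m, i < j → ¬ β j ≤ η + β i}

/-- The cone of `β i` by its multiplicative set. -/
def cone {n m : ℕ} (β : Fin m → Term n) (i : Fin m) : Set (Term n) :=
  {γ | ∃ η ∈ multSet β i, γ = η + β i}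

/-- One step of border reduction: some `γ = η β_i ∈ supp g` with `η ∈ M_{β_i}` is replaced
using the marked polynomial `B i`. -/
def BStep {n m : ℕ} {A : Type*} [CommRing A] (β : Fin m → Term n)
    (B : Fin m → MvPolynomial (Fin n) A) (g h : MvPolynomial (Fin n) A) : Prop :=
  ∃ (i : Fin m) (η : Term n), η ∈ multSet β i ∧ η + β i ∈ g.support ∧
    h = g - monomial η (g.coeff (η + β i)) * B i

/-- The S-polynomial of two marked polynomials with head terms `α`, `α'`. -/
noncomputable def Spoly {n : ℕ} {A : Type*} [CommRing A] (α α' : Term n)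
    (f f' : MvPolynomial (Fin n) A) : MvPolynomial (Fin n) A :=
  monomial (α ⊔ α' - α) 1 * f - monomial (α ⊔ α' - α') 1 * f'

/-- `(α, α')` is a neighbour couple of distinct terms. -/
def Neighbour {n : ℕ} (α α' : Term n) : Prop :=
  α ≠ α' ∧ ((∃ j : Fin n, α = α' + Finsupp.single j 1) ∨
    (∃ i j : Fin n, α + Finsupp.single i 1 = α' + Finsupp.single j 1))

/-- `(β i, β j)` is a non-multiplicative couple for the border reduction structure. -/
def NonMultB {n m : ℕ} (β : Fin m → Term n) (i j : Fin m) : Prop :=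
  ∃ (ℓ : Fin n) (δ : Term n), Finsupp.single ℓ 1 ∉ multSet β i ∧ δ ∈ multSet β j ∧
    Finsupp.single ℓ 1 + β i = δ + β j

/-- The Pommaret multiplicative set of a term `α`: terms in the variables `x_1, …, min α`. -/
def pommMult {n : ℕ} (α : Term n) : Set (Term n) :=
  {η | ∀ j : Fin n, η j ≠ 0 → ∀ k : Fin n, k < j → α k = 0}

/-- One step of Pommaret reduction. -/
def PStep {n : ℕ} {A : Type*} [CommRing A] (O : Set (Term n))
    (P : Term n → MvPolynomial (Fin n) A) (g h : MvPolynomial (Fin n) A) : Prop :=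
  ∃ α ∈ pommaret O, ∃ η ∈ pommMult α, η + α ∈ g.support ∧
    h = g - monomial η (g.coeff (η + α)) * P α

/-- `(α, α')` is a non-multiplicative couple for the Pommaret reduction structure. -/
def NonMultP {n : ℕ} (α α' : Term n) : Prop :=
  ∃ ℓ : Fin n, Finsupp.single ℓ 1 ∉ pommMult α ∧
    ∃ δ ∈ pommMult α', Finsupp.single ℓ 1 + α = δ + α'


lemma termDeg_add {n : ℕ} (σ τ : Term n) : termDeg (σ + τ) = termDeg σ + termDeg τ := by
  simp [termDeg, Finsupp.sum_fintype, Finset.sum_add_distrib]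

lemma termDeg_single {n : ℕ} (i : Fin n) : termDeg (Finsupp.single i 1) = 1 := by
  simp [termDeg]

lemma termDeg_eq_zero {n : ℕ} {σ : Term n} (h : termDeg σ = 0) : σ = 0 := by
  ext i
  simp [termDeg, Finsupp.sum_fintype, Finset.sum_eq_zero_iff] at h
  exact h i

lemma mem_iUnion_borderIter {n : ℕ} (O : Set (Term n)) (m : ℕ) (γ : Term n) :
    γ ∈ (⋃ j : Fin m, borderIter O j.1) ↔ ∃ j < m, γ ∈ borderIter O j := by
  simp only [Set.mem_iUnion]
  exact ⟨fun ⟨j, h⟩ => ⟨j.1, j.2, h⟩, fun ⟨j, hj, h⟩ => ⟨⟨j, hj⟩, h⟩⟩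

lemma sub_add_single {n : ℕ} {τ β : Term n} (i : Fin n) (hle : β ≤ τ) :
    (τ + Finsupp.single i 1) - β = (τ - β) + Finsupp.single i 1 := by
  ext j
  have := hle j
  simp only [Finsupp.tsub_apply, Finsupp.add_apply]
  omega

lemma key_iff {n : ℕ} (O : Set (Term n)) :
    ∀ k (γ : Term n), (∃ j < k + 1, γ ∈ borderIter O j) ↔
      γ ∈ O ∨ (γ ∉ O ∧ ∃ β ∈ border O, β ≤ γ ∧ termDeg (γ - β) < k) := by
  intro k
  induction k with
  | zero =>
    intro γ
    constructor
    · rintro ⟨j, hj, hmem⟩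
      interval_cases j
      rw [borderIter] at hmem
      exact Or.inl hmem
    · rintro (h | ⟨_, _, _, _, h⟩)
      · exact ⟨0, by omega, by rw [borderIter]; exact h⟩
      · omega
  | succ k ih =>
    intro γ
    constructor
    · rintro ⟨j, hj, hmem⟩
      by_cases hjk : j < k + 1
      · rcases (ih γ).1 ⟨j, hjk, hmem⟩ with h | ⟨h1, β, h2, h3, h4⟩
        · exact Or.inl h
        · exact Or.inr ⟨h1, β, h2, h3, by omega⟩
      · have hj' : j = k + 1 := by omega
        subst hj'
        rw [borderIter] at hmem
        obtain ⟨hnot, τ, hτU, i, hγeq⟩ := hmem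
        rw [mem_iUnion_borderIter] at hnot hτU
        have hγO : γ ∉ O := fun h =>
          hnot ⟨0, by omega, by rw [borderIter]; exact h⟩
        rcases (ih τ).1 hτU with hτO | ⟨hτO, β, hβ, hle, hdeg⟩
        · refine Or.inr ⟨hγO, γ, ⟨hγO, τ, hτO, i, hγeq⟩, le_refl γ, ?_⟩
          simp [termDeg]
        · refine Or.inr ⟨hγO, β, hβ, ?_, ?_⟩
          · exact le_trans hle (hγeq ▸ self_le_add_right τ _)
          · rw [hγeq, sub_add_single i hle, termDeg_add, termDeg_single]
            omega
    · rintro (hγO | ⟨hγO, β, hβmem, hle, hdeg⟩)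
      · exact ⟨0, by omega, by rw [borderIter]; exact hγO⟩
      · by_cases hU : ∃ j < k + 1, γ ∈ borderIter O j
        · obtain ⟨j, hj, h⟩ := hU
          exact ⟨j, by omega, h⟩
        · refine ⟨k + 1, by omega, ?_⟩
          rw [borderIter]
          refine ⟨by rw [mem_iUnion_borderIter]; exact hU, ?_⟩
          by_cases hd : termDeg (γ - β) = 0
          · have hγβ : γ = β := le_antisymm (tsub_eq_zero_iff_le.1 (termDeg_eq_zero hd)) hle
            obtain ⟨_, τ, hτO, i, hβeq⟩ := hβmem
            refine ⟨τ, ?_, i, by rw [hγβ, hβeq]⟩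
            rw [mem_iUnion_borderIter]
            exact ⟨0, by omega, by rw [borderIter]; exact hτO⟩
          · have hex : ∃ i, (γ - β) i ≠ 0 := by
              by_contra h
              push_neg at h
              exact hd (by rw [show γ - β = 0 from Finsupp.ext h]; simp [termDeg])
            obtain ⟨i, hi⟩ := hex
            rw [Finsupp.tsub_apply] at hi
            have hib : β i < γ i := by have := hle i; omega
            have hγτ : γ = (γ - Finsupp.single i 1) + Finsupp.single i 1 := by
              ext j
              rcases eq_or_ne j i with rfl | hne
              · simp only [Finsupp.add_apply, Finsupp.tsub_apply, Finsupp.single_apply,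
                  if_pos rfl, if_true]
                omega
              · simp [Finsupp.tsub_apply, Finsupp.single_apply, (Ne.symm hne)]
            have hβτ : β ≤ γ - Finsupp.single i 1 := by
              intro j
              rcases eq_or_ne j i with rfl | hne
              · simp only [Finsupp.tsub_apply, Finsupp.single_apply, if_pos rfl, if_true]
                omega
              · simp only [Finsupp.tsub_apply, Finsupp.single_apply, if_neg (Ne.symm hne)]
                have := hle j
                omega
            have hdegτ : termDeg ((γ - Finsupp.single i 1) - β) < k := by
              have heq : γ - β = ((γ - Finsupp.single i 1) - β) + Finsupp.single i 1 := by
                conv_lhs => rw [hγτ]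
                exact sub_add_single i hβτ
              rw [heq, termDeg_add, termDeg_single] at hdeg
              omega
            refine ⟨γ - Finsupp.single i 1, ?_, i, hγτ⟩
            rw [mem_iUnion_borderIter]
            refine (ih _).2 ?_
            by_cases hτO : γ - Finsupp.single i 1 ∈ O
            · exact Or.inl hτO
            · exact Or.inr ⟨hτO, β, hβmem, hβτ, hdegτ⟩

/-- Lemma `lem:IndB` (1): if `γ ∉ O` and `β ∈ ∂O` is a divisor of `γ` of
maximal degree among the border divisors of `γ`, then `ind_O(γ) = deg(γ/β) + 1`. -/
theorem indO_eq_of_maximal_border_divisor {n : ℕ}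
    (O : Set (Term n)) (hO : IsOrderIdeal O) (hOfin : O.Finite)
    (γ β : Term n) (hγ : γ ∉ O) (hβ : β ∈ border O) (hdvd : β ≤ γ)
    (hmax : ∀ β' ∈ border O, β' ≤ γ → termDeg β' ≤ termDeg β) :
    indO O γ = termDeg (γ - β) + 1 := by
  have hnotlow : ∀ k ≤ termDeg (γ - β), γ ∉ borderIter O k := by
    intro k hk hmem
    rcases (key_iff O k γ).1 ⟨k, Nat.lt_succ_self k, hmem⟩ with h | ⟨_, β', hβ', hle', hdeg'⟩
    · exact hγ h
    · have e1 : termDeg (γ - β') + termDeg β' = termDeg γ := by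
        rw [← termDeg_add, tsub_add_cancel_of_le hle']
      have e2 : termDeg (γ - β) + termDeg β = termDeg γ := by
        rw [← termDeg_add, tsub_add_cancel_of_le hdvd]
      have := hmax β' hβ' hle'
      omega
  have hmem : γ ∈ borderIter O (termDeg (γ - β) + 1) := by
    obtain ⟨j, hj, hmem⟩ := (key_iff O (termDeg (γ - β) + 1) γ).2
      (Or.inr ⟨hγ, β, hβ, hdvd, Nat.lt_succ_self _⟩)
    rcases Nat.lt_or_ge j (termDeg (γ - β) + 1) with h | h
    · exact absurd hmem (hnotlow j (by omega))
    · have : j = termDeg (γ - β) + 1 := by omega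
      exact this ▸ hmem
  unfold indO
  refine le_antisymm (Nat.sInf_le hmem) ?_
  have hIn := Nat.sInf_mem (s := {k | γ ∈ borderIter O k}) ⟨_, hmem⟩
  by_contra h
  push_neg at h
  exact hnotlow _ (by omega) hIn
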